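/- Fix an integer d ≥ 1 and a polynomial p(x) = a_0 + a_1 x + ⋯ + a_d x^d whose coefficients a_0, …, a_d are positive integers, and let C_p(n,k) be the coefficient of x^k in p(x)^n. Then for every integer n ≥ 1, every i with 0 ≤ i ≤ d−1, and every k with i ≤ k ≤ nd: n · (d−i) · a_i · C_p(n−1, k−i) ≤ (nd − k) · C_p(n,k). -/
import Mathlib

open Polynomial Finset


private lemma coeff_sum_mul (d : ℕ) (a : ℕ → ℕ) (q : Polynomial ℕ) (k : ℕ) :
    ((∑ j ∈ range (d + 1), C (a j) * X ^ j) * q).coeff k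
      = ∑ j ∈ range (d + 1), if j ≤ k then a j * q.coeff (k - j) else 0 := by
  rw [Finset.sum_mul, Polynomial.finset_sum_coeff]
  refine Finset.sum_congr rfl fun j _ => ?_
  have h : C (a j) * X ^ j * q = C (a j) * (q * X ^ j) := by ring
  rw [h, Polynomial.coeff_C_mul, Polynomial.coeff_mul_X_pow']
  split_ifs <;> simp

private lemma weight_identity (d : ℕ) (a : ℕ → ℕ) (n : ℕ) (k : ℕ) :
    k * (((∑ j ∈ range (d + 1), C (a j) * X ^ j) : Polynomial ℕ) ^ n).coeff k
      = n * ∑ j ∈ range (d + 1), if j ≤ k then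
          j * a j * (((∑ j ∈ range (d + 1), C (a j) * X ^ j) : Polynomial ℕ) ^ (n - 1)).coeff (k - j) else 0 := by
  set P : Polynomial ℕ := ∑ j ∈ range (d + 1), C (a j) * X ^ j with hP
  rcases Nat.eq_zero_or_pos k with rfl | hk
  · simp only [Nat.zero_mul, zero_mul]
    rw [Finset.sum_eq_zero, mul_zero]
    intro j hj
    split_ifs with h
    · interval_cases j; simp
    · rfl
  · have hder : derivative (P ^ n) = C (n : ℕ) * P ^ (n - 1) * derivative P :=
      Polynomial.derivative_pow P n
    have hdP : derivative P = ∑ j ∈ range (d + 1), C (a j * j) * X ^ (j - 1) := by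
      rw [hP, map_sum]
      exact Finset.sum_congr rfl fun j _ => Polynomial.derivative_C_mul_X_pow _ _
    have h1 : (derivative (P ^ n)).coeff (k - 1) = (P ^ n).coeff k * k := by
      rw [Polynomial.coeff_derivative, Nat.cast_id]
      have hk1 : k - 1 + 1 = k := Nat.succ_pred_eq_of_pos hk
      rw [hk1]
    rw [hder, hdP] at h1
    have h2 : (C (n : ℕ) * P ^ (n - 1) * ∑ j ∈ range (d + 1), C (a j * j) * X ^ (j - 1)).coeff (k - 1)
        = n * ∑ j ∈ range (d + 1), if j ≤ k then j * a j * (P ^ (n - 1)).coeff (k - j) else 0 := by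
      rw [Finset.mul_sum, Polynomial.finset_sum_coeff, Finset.mul_sum]
      refine Finset.sum_congr rfl fun j _ => ?_
      have h : C (n : ℕ) * P ^ (n - 1) * (C (a j * j) * X ^ (j - 1))
          = C ((n : ℕ) * (a j * j)) * (P ^ (n - 1) * X ^ (j - 1)) := by
        simp [map_mul]; ring
      rw [h, Polynomial.coeff_C_mul, Polynomial.coeff_mul_X_pow']
      rcases Nat.eq_zero_or_pos j with rfl | hj
      · simp
      · have hsub : k - 1 - (j - 1) = k - j := by omega
        rw [hsub]
        split_ifs with h1' h2' h2'
        · ring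
        · omega
        · omega
        · simp
    rw [h2] at h1
    exact (mul_comm k _).trans h1.symm

/-- Symmetric counterpart of part 2 of the paper's Lemma 6: for `0 ≤ i ≤ d−1`
and `i ≤ k ≤ nd` one has `n·(d−i)·a_i·C_p(n−1,k−i) ≤ (nd−k)·C_p(n,k)`. -/
theorem generalized_binomial_row_estimate_symmetric
    (d : ℕ) (hd : 1 ≤ d) (a : ℕ → ℕ) (ha : ∀ i ≤ d, 0 < a i)
    (P : Polynomial ℕ)
    (hP : P = ∑ i ∈ Finset.range (d + 1), Polynomial.C (a i) * Polynomial.X ^ i)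
    (n : ℕ) (hn : 1 ≤ n) (i : ℕ) (hid : i ≤ d - 1)
    (k : ℕ) (hik : i ≤ k) (hknd : k ≤ n * d) :
    n * (d - i) * a i * (P ^ (n - 1)).coeff (k - i) ≤ (n * d - k) * (P ^ n).coeff k := by
  subst hP
  set P : Polynomial ℕ := ∑ j ∈ range (d + 1), C (a j) * X ^ j with hP
  set Q : Polynomial ℕ := P ^ (n - 1) with hQ
  have hPn : P ^ n = P * Q := by
    calc P ^ n = P ^ (n - 1 + 1) := by rw [Nat.sub_add_cancel hn]
    _ = P * P ^ (n - 1) := pow_succ' P _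
  have A : (P ^ n).coeff k = ∑ j ∈ range (d + 1), if j ≤ k then a j * Q.coeff (k - j) else 0 := by
    rw [hPn]; exact coeff_sum_mul d a Q k
  have B : k * (P ^ n).coeff k
      = n * ∑ j ∈ range (d + 1), if j ≤ k then j * a j * Q.coeff (k - j) else 0 :=
    weight_identity d a n k
  have key : (d - i) * a i * Q.coeff (k - i)
        + ∑ j ∈ range (d + 1), (if j ≤ k then j * a j * Q.coeff (k - j) else 0)
      ≤ ∑ j ∈ range (d + 1), (if j ≤ k then d * a j * Q.coeff (k - j) else 0) := by
    have hmem : i ∈ range (d + 1) := by simp [Finset.mem_range]; omega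
    have hsingle : (d - i) * a i * Q.coeff (k - i)
        = ∑ j ∈ range (d + 1), (if j = i then (d - i) * a i * Q.coeff (k - i) else 0) := by
      rw [Finset.sum_ite_eq' (range (d + 1)) i, if_pos hmem]
    rw [hsingle, ← Finset.sum_add_distrib]
    refine Finset.sum_le_sum fun j hj => ?_
    have hjd : j ≤ d := by simp [Finset.mem_range] at hj; omega
    split_ifs with h1 h2 h2
    · rw [h1]
      have hadd : (d - i) * a i + i * a i = d * a i := by rw [← add_mul]; congr 1; omega
      rw [← add_mul, hadd]
    · omega
    · simp only [zero_add]
      exact Nat.mul_le_mul_right _ (Nat.mul_le_mul_right _ hjd)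
    · simp
  rw [Nat.sub_mul]
  apply Nat.le_sub_of_add_le
  calc n * (d - i) * a i * Q.coeff (k - i) + k * (P ^ n).coeff k
      = n * ((d - i) * a i * Q.coeff (k - i)
          + ∑ j ∈ range (d + 1), (if j ≤ k then j * a j * Q.coeff (k - j) else 0)) := by
        rw [B]; ring
    _ ≤ n * ∑ j ∈ range (d + 1), (if j ≤ k then d * a j * Q.coeff (k - j) else 0) :=
        Nat.mul_le_mul_left n key
    _ = n * d * (P ^ n).coeff k := by
        have hsum : (∑ j ∈ range (d + 1), (if j ≤ k then d * a j * Q.coeff (k - j) else 0))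
            = d * ∑ j ∈ range (d + 1), (if j ≤ k then a j * Q.coeff (k - j) else 0) := by
          rw [Finset.mul_sum]
          refine Finset.sum_congr rfl fun j _ => ?_
          split_ifs <;> ring
        rw [hsum, A, mul_assoc]
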